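/- arXiv:1109.3296 — 2 statements merged into one kernel-verified Lean document; each statement's English description precedes it below -/
import Mathlib

section
/- Let x : I → EuclideanSpace ℝ n be a differentiable curve on an interval I satisfying x'(t) = X(x(t)) + v₀(x(t)) + w(x(t)) for all t ∈ I, where w is a vector field satisfying ⟪w(p), ∇G(p)⟫ = 0 and ⟪w(p), ∇F_i(p)⟫ = 0 for all p and all i, and X satisfies ⟪X(p), ∇G(p)⟫ = 0 for all p. Then the function t ↦ G(x(t)) is monotone nondecreasing on I. -/
open scoped RealInnerProductSpace

/-- The matrix `Σ^{(a₁,…,a_r)}_{(b₁,…,b_s)}` whose `(p,q)` entry is `⟪b_q, a_p⟫`. -/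
noncomputable def sigmaMat {V : Type*} [NormedAddCommGroup V] [InnerProductSpace ℝ V]
    {r s : ℕ} (a : Fin r → V) (b : Fin s → V) : Matrix (Fin r) (Fin s) ℝ :=
  Matrix.of fun p q => ⟪b q, a p⟫

/-- The standard control vector field at a point `p`, built from the gradients of
the `k+1` conserved quantities `F₀,…,F_k` and of the dissipated quantity `G`. -/
noncomputable def v0 {n : ℕ} {k : ℕ}
    (F : Fin (k+1) → EuclideanSpace ℝ (Fin n) → ℝ)
    (G : EuclideanSpace ℝ (Fin n) → ℝ)
    (p : EuclideanSpace ℝ (Fin n)) : EuclideanSpace ℝ (Fin n) :=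
  (∑ i : Fin (k+1),
    ((-1 : ℝ) ^ ((i : ℕ) + k + 1) *
      (sigmaMat (fun j => gradient (F j) p)
        (Fin.snoc (fun j => gradient (F (i.succAbove j)) p) (gradient G p))).det) •
      gradient (F i) p)
  + (sigmaMat (fun j => gradient (F j) p) (fun j => gradient (F j) p)).det • gradient G p

lemma gram_det_nonneg' {m n : ℕ} (a : Fin m → EuclideanSpace ℝ (Fin n)) :
    0 ≤ (Matrix.of fun p q => (⟪a q, a p⟫ : ℝ)).det := by
  set M : Matrix (Fin n) (Fin m) ℝ := Matrix.of fun i j => a j i with hM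
  have h : (Matrix.of fun p q => (⟪a q, a p⟫ : ℝ)) = Matrix.conjTranspose M * M := by
    ext p q
    simp [hM, Matrix.mul_apply, Matrix.conjTranspose_apply, PiLp.inner_apply, mul_comm,
      real_inner_comm (a q) (a p)]
  rw [h]
  have hp := Matrix.posSemidef_conjTranspose_mul_self M
  rw [hp.isHermitian.det_eq_prod_eigenvalues]
  exact Finset.prod_nonneg fun i _ => RCLike.ofReal_nonneg.mpr (hp.eigenvalues_nonneg i)

lemma snoc_succAbove' {α : Type*} {m : ℕ} (g : Fin (m+1) → α) (c : α) (i : Fin (m+1))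
    (q : Fin (m+1)) :
    (Fin.snoc g c : Fin (m+2) → α) ((Fin.castSucc i).succAbove q)
      = (Fin.snoc (fun j => g (i.succAbove j)) c : Fin (m+1) → α) q := by
  induction q using Fin.lastCases with
  | last =>
    rw [Fin.succAbove_of_le_castSucc _ _ (by simpa using Fin.le_last i)]
    simp [Fin.succ_last]
  | cast j =>
    simp only [Fin.snoc_castSucc]
    rcases lt_or_ge (Fin.castSucc j) i with hlt | hle
    · rw [Fin.succAbove_of_castSucc_lt _ _ (by simpa using hlt),
        Fin.succAbove_of_castSucc_lt _ _ hlt]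
      simp
    · rw [Fin.succAbove_of_le_castSucc _ _ (by simpa using hle),
        Fin.succAbove_of_le_castSucc _ _ hle, Fin.succ_castSucc]
      simp [Fin.succ_castSucc, -Fin.castSucc_succ]

lemma inner_v0_eq_det {n k : ℕ}
    (F : Fin (k+1) → EuclideanSpace ℝ (Fin n) → ℝ)
    (G : EuclideanSpace ℝ (Fin n) → ℝ) (p : EuclideanSpace ℝ (Fin n)) :
    ⟪v0 F G p, gradient G p⟫
      = (sigmaMat (Fin.snoc (fun j => gradient (F j) p) (gradient G p) : Fin (k+2) → _)
          (Fin.snoc (fun j => gradient (F j) p) (gradient G p))).det := by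
  simp only [v0]
  set g : Fin (k+1) → EuclideanSpace ℝ (Fin n) := fun j => gradient (F j) p with hg
  set Gp : EuclideanSpace ℝ (Fin n) := gradient G p with hGp
  set a : Fin (k+2) → EuclideanSpace ℝ (Fin n) := Fin.snoc g Gp with ha
  conv_rhs => rw [Matrix.det_succ_row (sigmaMat a a) (Fin.last (k+1)), Fin.sum_univ_castSucc]
  rw [inner_add_left, sum_inner]
  congr 1
  · refine Finset.sum_congr rfl fun i _ => ?_
    rw [real_inner_smul_left]
    have h1 : (sigmaMat a a) (Fin.last (k+1)) (Fin.castSucc i) = ⟪g i, Gp⟫ := by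
      simp [sigmaMat, ha, real_inner_comm]
    have h2 : (sigmaMat a a).submatrix (Fin.last (k+1)).succAbove (Fin.castSucc i).succAbove
        = sigmaMat g (Fin.snoc (fun j => g (i.succAbove j)) Gp) := by
      ext p' q'
      simp [sigmaMat, Matrix.submatrix_apply, Fin.succAbove_last, snoc_succAbove', ha]
    rw [h1, h2]
    rw [show (i : ℕ) + k + 1 = (Fin.last (k+1) : ℕ) + (Fin.castSucc i : ℕ) from by
      simp; omega]
    ring
  · rw [real_inner_smul_left]
    have h1 : (sigmaMat a a) (Fin.last (k+1)) (Fin.last (k+1)) = ⟪Gp, Gp⟫ := by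
      simp [sigmaMat, ha]
    have h2 : (sigmaMat a a).submatrix (Fin.last (k+1)).succAbove (Fin.last (k+1)).succAbove
        = sigmaMat g g := by
      ext p' q'
      simp [sigmaMat, Matrix.submatrix_apply, Fin.succAbove_last, ha]
    have h3 : ((-1 : ℝ)) ^ ((Fin.last (k+1) : ℕ) + (Fin.last (k+1) : ℕ)) = 1 := by
      rw [← two_mul, pow_mul]; norm_num
    rw [h1, h2, h3]
    ring

lemma inner_v0_nonneg {n k : ℕ}
    (F : Fin (k+1) → EuclideanSpace ℝ (Fin n) → ℝ)
    (G : EuclideanSpace ℝ (Fin n) → ℝ) (p : EuclideanSpace ℝ (Fin n)) :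
    0 ≤ ⟪v0 F G p, gradient G p⟫ := by
  rw [inner_v0_eq_det]
  exact gram_det_nonneg' _

theorem stmt_3 {n k : ℕ} (hn : 1 ≤ n)
    (F : Fin (k+1) → EuclideanSpace ℝ (Fin n) → ℝ)
    (G : EuclideanSpace ℝ (Fin n) → ℝ)
    (hF : ∀ i, Differentiable ℝ (F i)) (hG : Differentiable ℝ G)
    (X w : EuclideanSpace ℝ (Fin n) → EuclideanSpace ℝ (Fin n))
    (hwG : ∀ p, ⟪w p, gradient G p⟫ = 0)
    (hwF : ∀ p, ∀ i, ⟪w p, gradient (F i) p⟫ = 0)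
    (hX : ∀ p, ⟪X p, gradient G p⟫ = 0)
    (I : Set ℝ) (hI : I.OrdConnected)
    (x : ℝ → EuclideanSpace ℝ (Fin n))
    (hx : ∀ t ∈ I, HasDerivAt x (X (x t) + v0 F G (x t) + w (x t)) t) :
    MonotoneOn (fun t => G (x t)) I := by
  have hd : ∀ t ∈ I, HasDerivAt (fun t => G (x t))
      ⟪gradient G (x t), X (x t) + v0 F G (x t) + w (x t)⟫ t := by
    intro t ht
    have h1 := ((hG (x t)).hasGradientAt).hasFDerivAt
    have h2 := h1.comp_hasDerivAt t (hx t ht)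
    simpa [Function.comp_def, InnerProductSpace.toDual_apply_apply] using h2
  refine monotoneOn_of_hasDerivWithinAt_nonneg (hI.convex)
    (hG.continuous.comp_continuousOn fun t ht =>
      ((hx t ht).differentiableAt.continuousAt).continuousWithinAt)
    (f' := fun t => ⟪gradient G (x t), X (x t) + v0 F G (x t) + w (x t)⟫)
    (fun t ht => (hd t (interior_subset ht)).hasDerivWithinAt.mono interior_subset)
    (fun t _ => ?_)
  show (0:ℝ) ≤ ⟪gradient G (x t), X (x t) + v0 F G (x t) + w (x t)⟫
  rw [inner_add_right, inner_add_right]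
  have h1 : (⟪gradient G (x t), X (x t)⟫ : ℝ) = 0 := by
    rw [real_inner_comm]; exact hX _
  have h2 : (⟪gradient G (x t), w (x t)⟫ : ℝ) = 0 := by
    rw [real_inner_comm]; exact hwG _
  have h3 : (0:ℝ) ≤ ⟪gradient G (x t), v0 F G (x t)⟫ := by
    rw [real_inner_comm]; exact inner_v0_nonneg F G (x t)
  rw [h1, h2]
  simpa using h3
end

section
/- Let x : I → EuclideanSpace ℝ n be a differentiable curve on an interval I satisfying x'(t) = X(x(t)) + v₀(x(t)) + w(x(t)) for all t ∈ I, where for a fixed s ∈ {1,…,k} the vector fields X and w satisfy ⟪X(p), ∇F_s(p)⟫ = 0 and ⟪w(p), ∇F_s(p)⟫ = 0 for all p. Then the function t ↦ F_s(x(t)) is constant on I; that is, F_s is a conserved quantity of the perturbed system ẋ = X(x) + v₀(x) + w(x). -/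
open scoped RealInnerProductSpace

lemma snoc_comp_succAbove' {V : Type*} {k : ℕ} (a : Fin (k+1) → V) (g : V)
    (i : Fin (k+1)) (q : Fin (k+1)) :
    (Fin.snoc a g : Fin (k+2) → V) ((Fin.castSucc i).succAbove q) =
      (Fin.snoc (fun j => a (i.succAbove j)) g : Fin (k+1) → V) q := by
  refine Fin.lastCases ?_ (fun q' => ?_) q
  · rw [Fin.succAbove_castSucc_of_le _ _ (Fin.le_last i), Fin.succ_last]
    simp
  · rcases lt_or_ge (Fin.castSucc q') i with h | h
    · rw [Fin.succAbove_castSucc_of_lt _ _ h, Fin.snoc_castSucc, Fin.snoc_castSucc,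
        Fin.succAbove_of_castSucc_lt _ _ h]
    · rw [Fin.succAbove_castSucc_of_le _ _ h, Fin.succ_castSucc, Fin.snoc_castSucc,
        Fin.snoc_castSucc, Fin.succAbove_of_le_castSucc _ _ h]

lemma key {V : Type*} [NormedAddCommGroup V] [InnerProductSpace ℝ V] {k : ℕ}
    (a : Fin (k+1) → V) (g : V) (s : Fin (k+1)) :
    ∑ i : Fin (k+1), ((-1:ℝ)^((i:ℕ)+k+1) *
        (sigmaMat a (Fin.snoc (fun j => a (i.succAbove j)) g)).det) * ⟪a i, a s⟫
      + (sigmaMat a a).det * ⟪g, a s⟫ = 0 := by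
  set M : Matrix (Fin (k+2)) (Fin (k+2)) ℝ :=
    sigmaMat (Fin.snoc a (a s)) (Fin.snoc a g) with hM
  have hdet : M.det = 0 := by
    apply Matrix.det_zero_of_row_eq (i := Fin.castSucc s) (j := Fin.last (k+1))
      (Fin.ne_of_lt (Fin.castSucc_lt_last s))
    funext q
    simp [hM, sigmaMat]
  have hexp := Matrix.det_succ_row M (Fin.last (k+1))
  rw [hdet] at hexp
  rw [Fin.sum_univ_castSucc] at hexp
  have hlastrow : ∀ q, M (Fin.last (k+1)) q = ⟪(Fin.snoc a g : Fin (k+2) → V) q, a s⟫ := by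
    intro q; simp [hM, sigmaMat]
  have h1 : ∀ i : Fin (k+1),
      M.submatrix (Fin.last (k+1)).succAbove (Fin.castSucc i).succAbove =
        sigmaMat a (Fin.snoc (fun j => a (i.succAbove j)) g) := by
    intro i
    ext p q
    simp only [Matrix.submatrix_apply, hM, sigmaMat, Matrix.of_apply, Fin.succAbove_last_apply,
      Fin.snoc_castSucc, snoc_comp_succAbove' a g i q]
  have h2 : M.submatrix (Fin.last (k+1)).succAbove (Fin.last (k+1)).succAbove = sigmaMat a a := by
    ext p q
    simp [hM, sigmaMat, Fin.succAbove_last_apply]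
  rw [h2] at hexp
  calc ∑ i : Fin (k+1), ((-1:ℝ)^((i:ℕ)+k+1) *
        (sigmaMat a (Fin.snoc (fun j => a (i.succAbove j)) g)).det) * ⟪a i, a s⟫
      + (sigmaMat a a).det * ⟪g, a s⟫
      = ∑ i : Fin (k+1), (-1:ℝ) ^ ((Fin.last (k+1) : ℕ) + ((Fin.castSucc i : Fin (k+2)) : ℕ)) *
          M (Fin.last (k+1)) (Fin.castSucc i) *
          (M.submatrix (Fin.last (k+1)).succAbove (Fin.castSucc i).succAbove).det
        + (-1:ℝ) ^ ((Fin.last (k+1) : ℕ) + ((Fin.last (k+1) : Fin (k+2)) : ℕ)) *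
          M (Fin.last (k+1)) (Fin.last (k+1)) * (sigmaMat a a).det := by
        congr 1
        · refine Finset.sum_congr rfl fun i _ => ?_
          rw [h1 i, hlastrow]
          simp only [Fin.snoc_castSucc, Fin.val_last, Fin.coe_castSucc]
          ring_nf
        · rw [hlastrow]
          simp only [Fin.snoc_last, Fin.val_last]
          rw [show ((-1:ℝ))^((k+1)+(k+1)) = 1 from by
            rw [← two_mul]; exact Even.neg_one_pow ⟨k+1, by ring⟩]
          ring
    _ = 0 := hexp.symm

lemma inner_v0 {n k : ℕ} (F : Fin (k+1) → EuclideanSpace ℝ (Fin n) → ℝ)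
    (G : EuclideanSpace ℝ (Fin n) → ℝ) (p : EuclideanSpace ℝ (Fin n)) (s : Fin (k+1)) :
    ⟪v0 F G p, gradient (F s) p⟫ = 0 := by
  have h := key (fun j => gradient (F j) p) (gradient G p) s
  rw [v0, inner_add_left, sum_inner, real_inner_smul_left]
  simp only [real_inner_smul_left]
  exact h

theorem stmt_4 {n k : ℕ} (hn : 1 ≤ n)
    (F : Fin (k+1) → EuclideanSpace ℝ (Fin n) → ℝ)
    (G : EuclideanSpace ℝ (Fin n) → ℝ)
    (hF : ∀ i, Differentiable ℝ (F i)) (hG : Differentiable ℝ G)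
    (X w : EuclideanSpace ℝ (Fin n) → EuclideanSpace ℝ (Fin n))
    (s : Fin (k+1))
    (hXs : ∀ p, ⟪X p, gradient (F s) p⟫ = 0)
    (hws : ∀ p, ⟪w p, gradient (F s) p⟫ = 0)
    (I : Set ℝ) (hI : I.OrdConnected)
    (x : ℝ → EuclideanSpace ℝ (Fin n))
    (hx : ∀ t ∈ I, HasDerivAt x (X (x t) + v0 F G (x t) + w (x t)) t) :
    ∀ t₁ ∈ I, ∀ t₂ ∈ I, F s (x t₁) = F s (x t₂) := by
  have hderiv : ∀ t ∈ I, HasDerivAt (fun t => F s (x t)) 0 t := by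
    intro t ht
    have hg := ((hF s) (x t)).hasGradientAt
    have h1 := hg.hasFDerivAt.comp_hasDerivAt t (hx t ht)
    have h2 : ⟪gradient (F s) (x t), X (x t) + v0 F G (x t) + w (x t)⟫ = 0 := by
      have e1 := hXs (x t); have e2 := hws (x t); have e3 := inner_v0 F G (x t) s
      rw [real_inner_comm] at e1 e2 e3
      rw [inner_add_right, inner_add_right, e1, e2, e3]
      ring
    simp [-toDual_gradient, InnerProductSpace.toDual_apply_apply, h2] at h1; exact h1
  have main : ∀ t₁ ∈ I, ∀ t₂ ∈ I, t₁ ≤ t₂ → F s (x t₁) = F s (x t₂) := by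
    intro t₁ h₁ t₂ h₂ hle
    have hsub : Set.Icc t₁ t₂ ⊆ I := hI.out h₁ h₂
    have hcont : ContinuousOn (fun t => F s (x t)) (Set.Icc t₁ t₂) :=
      fun y hy => ((hderiv y (hsub hy)).continuousAt).continuousWithinAt
    have hd : ∀ y ∈ Set.Ico t₁ t₂, HasDerivWithinAt (fun t => F s (x t)) 0 (Set.Ici y) y :=
      fun y hy => (hderiv y (hsub (Set.Ico_subset_Icc_self hy))).hasDerivWithinAt
    exact (constant_of_has_deriv_right_zero hcont hd t₂ (Set.right_mem_Icc.2 hle)).symm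
  intro t₁ h₁ t₂ h₂
  rcases le_total t₁ t₂ with h | h
  · exact main t₁ h₁ t₂ h₂ h
  · exact (main t₂ h₂ t₁ h₁ h).symm
end
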